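/- As p → +∞, u_p converges to the function t ↦ 1 - |t| (which equals 2G(t,0), twice the Green's function of -d²/dt² with Dirichlet boundary conditions on (-1,1) at the origin) uniformly on [-1,1]; moreover, for every compact set K ⊂ [-1,1] \ {0}, both sup_K |u_p - (1-|·|)| → 0 and sup_K |u_p' - (1-|·|)'| → 0 as p → +∞. -/

import Mathlib

open Real Set Filter Topology

noncomputable section

/-- `u` is the (unique) positive solution of the one-dimensional Lane–Emden problem
`-u'' = u^p` on `(-1,1)` with `u(-1) = u(1) = 0`; it is even, positive on `(-1,1)`,
decreasing on `[0,1]`, and its sup norm is attained at `0`. -/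
def IsLaneEmden (p : ℝ) (u : ℝ → ℝ) : Prop :=
  ContDiff ℝ 2 u ∧
  (∀ t ∈ Ioo (-1 : ℝ) 1, deriv (deriv u) t = -(u t ^ p)) ∧
  u (-1) = 0 ∧ u 1 = 0 ∧
  (∀ t ∈ Ioo (-1 : ℝ) 1, 0 < u t) ∧
  (∀ t : ℝ, u (-t) = u t) ∧
  (∀ ⦃s t : ℝ⦄, s ∈ Icc (0 : ℝ) 1 → t ∈ Icc (0 : ℝ) 1 → s ≤ t → u t ≤ u s) ∧
  (∀ t ∈ Icc (-1 : ℝ) 1, u t ≤ u 0)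

namespace LEAux

variable {p : ℝ} {f : ℝ → ℝ} {δ : ℝ}

lemma hdiff (h : IsLaneEmden p f) : Differentiable ℝ f :=
  h.1.differentiable (by norm_num)

lemma hCd1 (h : IsLaneEmden p f) : ContDiff ℝ 1 (deriv f) := by
  have h2 : ContDiff ℝ ((1:ℕ) + 1) f := by exact_mod_cast h.1
  exact (contDiff_succ_iff_deriv.1 h2).2.2

lemma hdiff' (h : IsLaneEmden p f) : Differentiable ℝ (deriv f) :=
  (hCd1 h).differentiable (by norm_num)

lemma hcont' (h : IsLaneEmden p f) : Continuous (deriv f) :=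
  (hdiff' h).continuous

lemma hnonneg (h : IsLaneEmden p f) : ∀ t ∈ Icc (-1:ℝ) 1, 0 ≤ f t := by
  intro t ht
  rcases eq_or_lt_of_le ht.1 with h1 | h1
  · simp [← h1, h.2.2.1]
  rcases eq_or_lt_of_le ht.2 with h2 | h2
  · simp [h2, h.2.2.2.1]
  · exact (h.2.2.2.2.1 t ⟨h1, h2⟩).le

lemma deriv_neg_eq (h : IsLaneEmden p f) (t : ℝ) : deriv f t = -deriv f (-t) := by
  have hf : HasDerivAt f (deriv f (-t)) (-t) := (hdiff h (-t)).hasDerivAt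
  have hneg : HasDerivAt (fun s : ℝ => -s) (-1) t := by
    exact (hasDerivAt_id' t).neg
  have hcomp : HasDerivAt (fun s : ℝ => f (-s)) (deriv f (-t) * (-1)) t :=
    HasDerivAt.comp t hf hneg
  have heq : (fun s : ℝ => f (-s)) = f := funext h.2.2.2.2.2.1
  rw [heq] at hcomp
  rw [hcomp.deriv]; ring

lemma deriv_zero (h : IsLaneEmden p f) : deriv f 0 = 0 := by
  have := deriv_neg_eq h 0
  simp at this
  linarith [this]

lemma M_pos (h : IsLaneEmden p f) : 0 < f 0 :=
  h.2.2.2.2.1 0 (by norm_num)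

lemma antitone_deriv (h : IsLaneEmden p f) :
    AntitoneOn (deriv f) (Icc (-1:ℝ) 1) := by
  apply antitoneOn_of_deriv_nonpos (convex_Icc _ _) (hcont' h).continuousOn
    ((hdiff' h).differentiableOn)
  intro x hx
  rw [interior_Icc] at hx
  rw [h.2.1 x hx]
  have := Real.rpow_pos_of_pos (h.2.2.2.2.1 x hx) p
  linarith

lemma deriv_nonpos (h : IsLaneEmden p f) :
    ∀ t ∈ Icc (0:ℝ) 1, deriv f t ≤ 0 := by
  intro t ht
  have := antitone_deriv h (by norm_num : (0:ℝ) ∈ Icc (-1:ℝ) 1)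
    ⟨by linarith [ht.1], ht.2⟩ ht.1
  rwa [deriv_zero h] at this

lemma energy (h : IsLaneEmden p f) (hp : 1 < p) :
    ∀ t ∈ Icc (-1:ℝ) 1,
      (deriv f t)^2 + 2/(p+1) * f t ^ (p+1) = 2/(p+1) * f 0 ^ (p+1) := by
  have h1 := hdiff h
  have h2 := hdiff' h
  set e := fun s => (deriv f s)^2 + 2/(p+1) * f s ^ (p+1) with he
  have hd : ∀ t ∈ Ioo (-1:ℝ) 1, HasDerivAt e 0 t := by
    intro t ht
    have hf' : HasDerivAt f (deriv f t) t := (h1 t).hasDerivAt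
    have hf'' : HasDerivAt (deriv f) (deriv (deriv f) t) t := (h2 t).hasDerivAt
    have h3 : HasDerivAt (fun s => (deriv f s)^2)
        (2 * deriv f t ^ 1 * deriv (deriv f) t) t := by
      simpa using hf''.fun_pow 2
    have h4 : HasDerivAt (fun s => f s ^ (p+1)) (deriv f t * (p+1) * f t ^ (p+1-1)) t :=
      hf'.rpow_const (Or.inl (ne_of_gt (h.2.2.2.2.1 t ht)))
    have h5 := h3.add (h4.const_mul (2/(p+1)))
    have hp1 : p + 1 ≠ 0 := by linarith
    have heq0 : 2 * deriv f t ^ 1 * deriv (deriv f) t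
        + 2/(p+1) * (deriv f t * (p+1) * f t ^ (p+1-1)) = 0 := by
      rw [h.2.1 t ht, show p+1-1 = p by ring]
      field_simp
      ring
    rwa [heq0] at h5
  have hc : Continuous e := by
    apply Continuous.add ((hcont' h).pow 2)
    apply Continuous.mul continuous_const
    rw [continuous_iff_continuousAt]
    intro x
    exact (h1.continuous.continuousAt).rpow_const (Or.inr (by linarith))
  have key : ∀ t ∈ Ioo (-1:ℝ) 1, e t = e 0 := by
    intro t ht
    rcases lt_trichotomy t 0 with hlt | hlt | hlt
    · obtain ⟨c, hc1, hc2⟩ := exists_deriv_eq_slope e hlt hc.continuousOn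
        (fun x hx => ((hd x ⟨lt_of_lt_of_le ht.1 hx.1.le, lt_trans hx.2 (by norm_num)⟩).differentiableAt).differentiableWithinAt)
      have h0 : deriv e c = 0 := (hd c ⟨lt_trans ht.1 hc1.1, lt_trans hc1.2 (by norm_num)⟩).deriv
      rw [h0] at hc2
      have hne : (0:ℝ) - t ≠ 0 := by linarith
      rw [eq_comm, div_eq_iff hne] at hc2
      linarith [hc2]
    · rw [hlt]
    · obtain ⟨c, hc1, hc2⟩ := exists_deriv_eq_slope e hlt hc.continuousOn
        (fun x hx => ((hd x ⟨lt_trans (by norm_num) hx.1, lt_trans hx.2 ht.2⟩).differentiableAt).differentiableWithinAt)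
      have h0 : deriv e c = 0 := (hd c ⟨lt_trans (by norm_num) hc1.1, lt_trans hc1.2 ht.2⟩).deriv
      rw [h0] at hc2
      have hne : t - (0:ℝ) ≠ 0 := by linarith
      rw [eq_comm, div_eq_iff hne] at hc2
      linarith [hc2]
  have final : ∀ t ∈ Icc (-1:ℝ) 1, e t = e 0 := by
    intro t ht
    rcases eq_or_lt_of_le ht.1 with h1' | h1'
    · have h2' : Tendsto e (𝓝[>] (-1:ℝ)) (𝓝 (e (-1))) :=
        (hc.continuousAt).continuousWithinAt.tendsto
      have h3 : Tendsto e (𝓝[>] (-1:ℝ)) (𝓝 (e 0)) := by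
        apply Tendsto.congr' _ tendsto_const_nhds
        filter_upwards [Ioo_mem_nhdsGT_of_mem (by norm_num : (-1:ℝ) ∈ Ico (-1:ℝ) 0)] with x hx
        exact (key x ⟨hx.1, by linarith [hx.2]⟩).symm
      rw [← h1']
      exact tendsto_nhds_unique h2' h3
    rcases eq_or_lt_of_le ht.2 with h2' | h2'
    · have h2'' : Tendsto e (𝓝[<] (1:ℝ)) (𝓝 (e 1)) :=
        (hc.continuousAt).continuousWithinAt.tendsto
      have h3 : Tendsto e (𝓝[<] (1:ℝ)) (𝓝 (e 0)) := by
        apply Tendsto.congr' _ tendsto_const_nhds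
        filter_upwards [Ioo_mem_nhdsLT_of_mem (by norm_num : (1:ℝ) ∈ Ioc 0 1)] with x hx
        exact (key x ⟨by linarith [hx.1], hx.2⟩).symm
      rw [h2']
      exact tendsto_nhds_unique h2'' h3
    · exact key t ⟨h1', h2'⟩
  intro t ht
  have := final t ht
  have h0 : e 0 = 2/(p+1) * f 0 ^ (p+1) := by
    simp only [he, deriv_zero h]
    ring
  rw [h0] at this
  exact this

lemma abs_deriv_le (h : IsLaneEmden p f) (hp : 1 < p) :
    ∀ t ∈ Icc (-1:ℝ) 1, |deriv f t| ≤ Real.sqrt (2/(p+1) * f 0 ^ (p+1)) := by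
  intro t ht
  have hen := energy h hp t ht
  have hfnn : 0 ≤ f t := hnonneg h t ht
  have hterm : 0 ≤ 2/(p+1) * f t ^ (p+1) := by
    have := Real.rpow_nonneg hfnn (p+1)
    have hp1 : (0:ℝ) ≤ 2/(p+1) := by positivity
    positivity
  have hsq : (deriv f t)^2 ≤ 2/(p+1) * f 0 ^ (p+1) := by linarith
  calc |deriv f t| = Real.sqrt ((deriv f t)^2) := (Real.sqrt_sq_eq_abs _).symm
  _ ≤ _ := Real.sqrt_le_sqrt hsq

lemma upper (h : IsLaneEmden p f) (hp : 1 < p) :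
    ∀ t ∈ Icc (0:ℝ) 1, f t ≤ Real.sqrt (2/(p+1) * f 0 ^ (p+1)) * (1 - t) := by
  intro t ht
  have h1 := hdiff h
  set L := Real.sqrt (2/(p+1) * f 0 ^ (p+1))
  rcases eq_or_lt_of_le ht.2 with hh | hh
  · rw [hh]
    simp [h.2.2.2.1]
  · obtain ⟨c, hc1, hc2⟩ := exists_deriv_eq_slope f hh h1.continuous.continuousOn
      h1.differentiableOn
    have hcI : c ∈ Icc (-1:ℝ) 1 := ⟨by linarith [hc1.1, ht.1], hc1.2.le⟩
    have habs := abs_deriv_le h hp c hcI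
    rw [hc2, h.2.2.2.1] at habs
    rw [abs_div, abs_of_pos (by linarith : (0:ℝ) < 1 - t)] at habs
    have h3 : |0 - f t| ≤ L * (1 - t) := by
      rw [div_le_iff₀ (by linarith : (0:ℝ) < 1 - t)] at habs
      linarith
    have h4 : f t ≤ |0 - f t| := by
      rw [abs_sub_comm]
      simpa using le_abs_self (f t - 0)
    linarith

lemma M_le_L (h : IsLaneEmden p f) (hp : 1 < p) :
    f 0 ≤ Real.sqrt (2/(p+1) * f 0 ^ (p+1)) := by
  have := upper h hp 0 (by norm_num)
  simpa using this

lemma concave (h : IsLaneEmden p f) : ConcaveOn ℝ (Icc (-1:ℝ) 1) f := by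
  apply concaveOn_of_deriv2_nonpos (convex_Icc _ _) (hdiff h).continuous.continuousOn
    (hdiff h).differentiableOn
  · intro x hx
    exact ((hdiff' h) x).differentiableWithinAt
  · intro x hx
    rw [interior_Icc] at hx
    have heq : deriv^[2] f x = deriv (deriv f) x := by
      simp [Function.iterate_succ, Function.iterate_zero]
    rw [heq, h.2.1 x hx]
    have := Real.rpow_pos_of_pos (h.2.2.2.2.1 x hx) p
    linarith

lemma lower (h : IsLaneEmden p f) :
    ∀ t ∈ Icc (0:ℝ) 1, f 0 * (1 - t) ≤ f t := by
  intro t ht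
  have hconc := concave h
  have := hconc.2 (by norm_num : (0:ℝ) ∈ Icc (-1:ℝ) 1) (by norm_num : (1:ℝ) ∈ Icc (-1:ℝ) 1)
    (by linarith [ht.2] : 0 ≤ 1 - t) (ht.1) (by ring)
  simp only [smul_eq_mul, mul_zero, mul_one, h.2.2.2.1] at this
  calc f 0 * (1-t) = (1-t) * f 0 + t * 0 := by ring
  _ ≤ f ((1-t) * 0 + t * 1) := by simpa using this
  _ = f t := by norm_num

lemma Mp_lower (h : IsLaneEmden p f) (hp : 1 < p) :
    (p+1)/2 ≤ f 0 ^ (p-1) := by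
  have hM := M_pos h
  have hML := M_le_L h hp
  have hE : (0:ℝ) ≤ 2/(p+1) * f 0 ^ (p+1) := by positivity
  have h2 : f 0 ^ 2 ≤ 2/(p+1) * f 0 ^ (p+1) := by
    nlinarith [Real.sq_sqrt hE, Real.sqrt_nonneg (2/(p+1) * f 0 ^ (p+1)), hML, hM]
  have hsplit : f 0 ^ (p+1) = f 0 ^ (2:ℕ) * f 0 ^ (p-1) := by
    rw [← Real.rpow_natCast (f 0) 2, ← Real.rpow_add hM]
    norm_num
    congr 1
    ring
  rw [hsplit] at h2
  have h3 : (1:ℝ) ≤ 2/(p+1) * f 0 ^ (p-1) := by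
    have hpos : (0:ℝ) < f 0 ^ (2:ℕ) := by positivity
    nlinarith
  have hp1 : (0:ℝ) < p + 1 := by linarith
  rw [div_mul_eq_mul_div, le_div_iff₀ hp1, one_mul] at h3
  linarith

lemma M_ge_one (h : IsLaneEmden p f) (hp : 1 < p) : 1 ≤ f 0 := by
  by_contra h'
  push_neg at h'
  have := Real.rpow_lt_one (M_pos h).le h' (by linarith : (0:ℝ) < p - 1)
  have := Mp_lower h hp
  linarith

lemma exists_t1 (h : IsLaneEmden p f) (hδ : 0 < δ) (hδ1 : δ < 1) :
    ∃ t₁ ∈ Ioo (0:ℝ) 1, f t₁ = (1-δ) * f 0 := by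
  have h1 := hdiff h
  have hf1 := h.2.2.2.1
  have hM := M_pos h
  have hsub : Icc (f 1) (f 0) ⊆ f '' Icc 0 1 :=
    intermediate_value_Icc' (by norm_num) h1.continuous.continuousOn
  have hmem : (1-δ) * f 0 ∈ Icc (f 1) (f 0) := by
    constructor
    · rw [hf1]; nlinarith
    · nlinarith
  obtain ⟨t₁, ht₁, hft₁⟩ := hsub hmem
  refine ⟨t₁, ⟨?_, ?_⟩, hft₁⟩
  · rcases eq_or_lt_of_le ht₁.1 with hh | hh
    · exfalso; rw [← hh] at hft₁; nlinarith
    · exact hh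
  · rcases eq_or_lt_of_le ht₁.2 with hh | hh
    · exfalso; rw [hh, hf1] at hft₁; nlinarith
    · exact hh

lemma claimA (h : IsLaneEmden p f) (hp : 1 < p)
    (hδ : 0 < δ) (hδ1 : δ < 1)
    {t₁ : ℝ} (ht₁ : t₁ ∈ Ioo (0:ℝ) 1) (hft₁ : f t₁ = (1-δ) * f 0) :
    ((1-δ) * f 0) ^ p * t₁^2 ≤ 2 * δ * f 0 := by
  have h1 := hdiff h
  have h2 := hdiff' h
  have hM := M_pos h
  have hd0 := deriv_zero h
  have hanti := h.2.2.2.2.2.2.1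
  set a := ((1-δ) * f 0) ^ p with ha
  have haM : (0:ℝ) < (1-δ) * f 0 := by nlinarith
  have hapos : 0 < a := Real.rpow_pos_of_pos haM p
  have hg'anti : AntitoneOn (fun t => deriv f t + a * t) (Icc 0 t₁) := by
    apply antitoneOn_of_deriv_nonpos (convex_Icc _ _)
      ((h2.continuous.add (continuous_const.mul continuous_id)).continuousOn)
      ((h2.add ((differentiable_id.const_mul a))).differentiableOn)
    intro x hx
    rw [interior_Icc] at hx
    show deriv (fun t => deriv f t + a * t) x ≤ 0
    have hder : HasDerivAt (fun t => deriv f t + a * t)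
        (deriv (deriv f) x + a * 1) x :=
      ((h2 x).hasDerivAt).add ((hasDerivAt_id x).const_mul a)
    rw [hder.deriv, h.2.1 x ⟨by linarith [hx.1], by linarith [hx.2, ht₁.2]⟩]
    have hxI : x ∈ Icc (0:ℝ) 1 := ⟨hx.1.le, by linarith [hx.2, ht₁.2]⟩
    have ht₁I : t₁ ∈ Icc (0:ℝ) 1 := ⟨ht₁.1.le, ht₁.2.le⟩
    have hfx : (1-δ) * f 0 ≤ f x := by
      rw [← hft₁]; exact hanti hxI ht₁I hx.2.le
    have : a ≤ f x ^ p := Real.rpow_le_rpow haM.le hfx (by linarith)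
    linarith
  have hg'le : ∀ t ∈ Icc (0:ℝ) t₁, deriv f t + a * t ≤ 0 := by
    intro t ht
    have := hg'anti (left_mem_Icc.2 (by linarith [ht₁.1])) ht ht.1
    simpa [hd0] using this
  have hganti : AntitoneOn (fun t => f t + a/2 * t^2) (Icc 0 t₁) := by
    apply antitoneOn_of_deriv_nonpos (convex_Icc _ _)
      ((h1.continuous.add (continuous_const.mul (continuous_pow 2))).continuousOn)
      ((h1.add ((differentiable_pow 2).const_mul (a/2))).differentiableOn)
    intro x hx
    rw [interior_Icc] at hx
    have hder : HasDerivAt (fun t => f t + a/2 * t^2)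
        (deriv f x + a/2 * (2 * x^1)) x :=
      ((h1 x).hasDerivAt).add ((hasDerivAt_pow 2 x).const_mul (a/2))
    show deriv (fun t => f t + a/2 * t^2) x ≤ 0
    rw [hder.deriv]
    have := hg'le x ⟨hx.1.le, hx.2.le⟩
    nlinarith [this]
  have := hganti (left_mem_Icc.2 (by linarith [ht₁.1])) (right_mem_Icc.2 (by linarith [ht₁.1]))
    (by linarith [ht₁.1])
  simp only [hft₁] at this
  nlinarith [this]

lemma claimB (h : IsLaneEmden p f) (hp : 1 < p)
    (hδ : 0 < δ) (hδ1 : δ < 1)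
    {t₁ : ℝ} (ht₁ : t₁ ∈ Ioo (0:ℝ) 1) (hft₁ : f t₁ = (1-δ) * f 0) :
    Real.sqrt (1 - (1-δ)^(p+1)) * (1 - t₁) * Real.sqrt (2/(p+1) * f 0 ^ (p+1))
      ≤ (1-δ) * f 0 := by
  have h1 := hdiff h
  have hf1 := h.2.2.2.1
  have hM := M_pos h
  have hnn := hnonneg h
  have hanti := h.2.2.2.2.2.2.1
  have hdnp := deriv_nonpos h
  have hen := energy h hp
  set E := 2/(p+1) * f 0 ^ (p+1) with hE
  set L := Real.sqrt E with hL
  set q := 1 - (1-δ)^(p+1) with hq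
  set c := Real.sqrt q with hc
  have hEpos : 0 < E := by
    have := Real.rpow_pos_of_pos hM (p+1)
    have hp1 : (0:ℝ) < 2/(p+1) := by positivity
    positivity
  have hqnn : 0 ≤ q := by
    have : (1-δ)^(p+1) ≤ 1 := Real.rpow_le_one (by linarith) (by linarith) (by linarith)
    simp only [hq]; linarith
  have hslope : ∀ t ∈ Icc t₁ 1, c * L ≤ -deriv f t := by
    intro t ht
    have htI : t ∈ Icc (0:ℝ) 1 := ⟨le_trans ht₁.1.le ht.1, ht.2⟩
    have hfle : f t ≤ (1-δ) * f 0 := by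
      rw [← hft₁]
      exact hanti ⟨ht₁.1.le, ht₁.2.le⟩ htI ht.1
    have hfnn : 0 ≤ f t := hnn t ⟨by linarith [htI.1], htI.2⟩
    have hfpow : f t ^ (p+1) ≤ (1-δ)^(p+1) * f 0 ^ (p+1) := by
      calc f t ^ (p+1) ≤ ((1-δ) * f 0) ^ (p+1) :=
            Real.rpow_le_rpow hfnn hfle (by linarith)
      _ = (1-δ)^(p+1) * f 0 ^ (p+1) := Real.mul_rpow (by linarith) hM.le
    have hsq : q * E ≤ (deriv f t)^2 := by
      have h2 := hen t ⟨by linarith [htI.1], htI.2⟩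
      have hp1 : (0:ℝ) < 2/(p+1) := by positivity
      have hkey : 2/(p+1) * f t ^ (p+1) ≤ (1-δ)^(p+1) * E := by
        rw [hE]
        calc 2/(p+1) * f t ^ (p+1) ≤ 2/(p+1) * ((1-δ)^(p+1) * f 0 ^ (p+1)) :=
              mul_le_mul_of_nonneg_left hfpow hp1.le
        _ = (1-δ)^(p+1) * (2/(p+1) * f 0 ^ (p+1)) := by ring
      simp only [hq]
      nlinarith [hkey, h2]
    have hcl : c * L = Real.sqrt (q * E) := (Real.sqrt_mul hqnn E).symm
    calc c * L = Real.sqrt (q * E) := hcl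
    _ ≤ Real.sqrt ((deriv f t)^2) := Real.sqrt_le_sqrt hsq
    _ = |deriv f t| := Real.sqrt_sq_eq_abs _
    _ = -deriv f t := abs_of_nonpos (hdnp t htI)
  obtain ⟨ξ, hξ1, hξ2⟩ := exists_deriv_eq_slope f ht₁.2 h1.continuous.continuousOn
    h1.differentiableOn
  have hξI : ξ ∈ Icc t₁ 1 := ⟨hξ1.1.le, hξ1.2.le⟩
  have hs := hslope ξ hξI
  rw [hξ2, hf1, hft₁] at hs
  have h1t : (0:ℝ) < 1 - t₁ := by linarith [ht₁.2]
  have this2 : c * L ≤ ((1-δ) * f 0) / (1 - t₁) := by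
    have heq : -((0 - (1 - δ) * f 0) / (1 - t₁)) = ((1-δ) * f 0) / (1 - t₁) := by ring
    linarith [heq ▸ hs]
  calc c * (1 - t₁) * L = (c * L) * (1 - t₁) := by ring
  _ ≤ ((1-δ) * f 0) / (1 - t₁) * (1 - t₁) := mul_le_mul_of_nonneg_right this2 h1t.le
  _ = (1-δ) * f 0 := by field_simp

def T2 (p : ℝ) : ℝ := 4 * Real.log p / (p+1) * Real.exp ((Real.log p)^2 / (p - Real.log p))
def Bf (p : ℝ) : ℝ := 1 / (Real.sqrt (1 - 1/p) * (1 - Real.sqrt (T2 p)))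
def Af (p : ℝ) : ℝ := Real.exp (Real.log ((p+1) * (Bf p)^2 / 2) / (p-1))

lemma tendsto_T2 : Tendsto T2 atTop (𝓝 0) := by
  have h1 : Tendsto (fun p : ℝ => Real.log p / (p+1)) atTop (𝓝 0) := by
    have := Real.tendsto_pow_log_div_mul_add_atTop 1 1 1 one_ne_zero
    simpa using this
  have hlogdiv : Tendsto (fun p : ℝ => Real.log p / p) atTop (𝓝 0) := by
    have := Real.tendsto_pow_log_div_mul_add_atTop 1 0 1 one_ne_zero
    simpa using this
  have hA : Tendsto (fun p : ℝ => (Real.log p)^2 / p) atTop (𝓝 0) := by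
    have := Real.tendsto_pow_log_div_mul_add_atTop 1 0 2 one_ne_zero
    simpa using this
  have hB : Tendsto (fun p : ℝ => 1 - Real.log p / p) atTop (𝓝 1) := by
    simpa using (tendsto_const_nhds.sub hlogdiv : Tendsto (fun p:ℝ => 1 - Real.log p/p) atTop (𝓝 (1 - 0)))
  have h2 : Tendsto (fun p : ℝ => (Real.log p)^2 / (p - Real.log p)) atTop (𝓝 0) := by
    have h3 : Tendsto (fun p : ℝ => ((Real.log p)^2 / p) / (1 - Real.log p / p)) atTop (𝓝 0) := by
      have h := hA.div hB one_ne_zero; rw [zero_div] at h; exact h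
    apply h3.congr'
    filter_upwards [eventually_gt_atTop (1:ℝ)] with p hp
    have hp0 : (0:ℝ) < p := by linarith
    have hlt : Real.log p < p := by
      have := Real.log_le_sub_one_of_pos hp0
      linarith
    field_simp
  have hexp : Tendsto (fun p : ℝ => Real.exp ((Real.log p)^2 / (p - Real.log p)))
      atTop (𝓝 1) := by
    have := (Real.continuous_exp.tendsto 0).comp h2
    simpa [Function.comp_def] using this
  have := (h1.const_mul 4).mul hexp
  simp only [mul_zero, zero_mul] at this
  apply this.congr'
  filter_upwards with p
  simp [T2]
  ring

lemma tendsto_Bf : Tendsto Bf atTop (𝓝 1) := by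
  have hinv : Tendsto (fun p : ℝ => 1/p) atTop (𝓝 0) := by
    simpa using tendsto_inv_atTop_zero
  have hs1 : Tendsto (fun p : ℝ => Real.sqrt (1 - 1/p)) atTop (𝓝 1) := by
    have h0 : Tendsto (fun p : ℝ => 1 - 1/p) atTop (𝓝 1) := by
      simpa using (tendsto_const_nhds.sub hinv : Tendsto (fun p:ℝ => 1 - 1/p) atTop (𝓝 (1-0)))
    have := (Real.continuous_sqrt.tendsto 1).comp h0
    simpa [Function.comp_def] using this
  have hs2 : Tendsto (fun p : ℝ => Real.sqrt (T2 p)) atTop (𝓝 0) := by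
    have := (Real.continuous_sqrt.tendsto 0).comp tendsto_T2
    simpa [Function.comp_def] using this
  have hden : Tendsto (fun p : ℝ => Real.sqrt (1 - 1/p) * (1 - Real.sqrt (T2 p)))
      atTop (𝓝 1) := by
    have := hs1.mul (tendsto_const_nhds.sub hs2 : Tendsto (fun p:ℝ => 1 - Real.sqrt (T2 p)) atTop (𝓝 (1-0)))
    simpa using this
  have h := (tendsto_const_nhds : Tendsto (fun _:ℝ => (1:ℝ)) atTop (𝓝 1)).div hden one_ne_zero
  simp only [div_one] at h
  apply h.congr
  intro p
  simp [Bf]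

lemma tendsto_Af : Tendsto Af atTop (𝓝 1) := by
  have hBpos : ∀ᶠ p : ℝ in atTop, (1:ℝ)/2 < Bf p :=
    tendsto_Bf.eventually (eventually_gt_nhds (by norm_num))
  have h1 : Tendsto (fun p : ℝ => Real.log (p+1) / (p-1)) atTop (𝓝 0) := by
    have h := Real.tendsto_pow_log_div_mul_add_atTop 1 (-2) 1 one_ne_zero
    have hcomp := h.comp (tendsto_atTop_add_const_right atTop 1 tendsto_id)
    apply hcomp.congr'
    filter_upwards with p
    simp only [Function.comp_apply, id_eq, pow_one, one_mul]
    congr 1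
    ring
  have h2 : Tendsto (fun p : ℝ => Real.log ((Bf p)^2 / 2) * (p-1)⁻¹) atTop (𝓝 0) := by
    have ha : Tendsto (fun p : ℝ => Real.log ((Bf p)^2 / 2)) atTop (𝓝 (Real.log (1/2))) := by
      have hc : ContinuousAt Real.log (1/2) := Real.continuousAt_log (by norm_num)
      have harg : Tendsto (fun p : ℝ => (Bf p)^2 / 2) atTop (𝓝 (1/2)) := by
        have := (tendsto_Bf.pow 2).div_const 2
        simpa using this
      exact hc.tendsto.comp harg
    have hb : Tendsto (fun p : ℝ => (p-1)⁻¹) atTop (𝓝 0) := by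
      apply tendsto_inv_atTop_zero.comp
      exact tendsto_atTop_add_const_right atTop (-1) tendsto_id
    have := ha.mul hb
    simpa using this
  have hsum : Tendsto (fun p : ℝ => Real.log (p+1) / (p-1) + Real.log ((Bf p)^2/2) * (p-1)⁻¹)
      atTop (𝓝 0) := by simpa using h1.add h2
  have hexp := (Real.continuous_exp.tendsto 0).comp hsum
  simp only [Real.exp_zero] at hexp
  apply hexp.congr'
  filter_upwards [hBpos, eventually_gt_atTop (1:ℝ)] with p hB hp
  simp only [Function.comp_apply, Af]
  congr 1
  have hBne : (Bf p)^2 / 2 ≠ 0 := by positivity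
  have hpne : (p:ℝ) + 1 ≠ 0 := by linarith
  rw [show (p+1) * (Bf p)^2/2 = (p+1) * ((Bf p)^2/2) by ring, Real.log_mul hpne hBne]
  ring


lemma chain (h : IsLaneEmden p f) (hp : 1 < p) (hT2 : Real.sqrt (T2 p) < 1) :
    Real.sqrt (2/(p+1) * f 0 ^ (p+1)) ≤ f 0 * Bf p := by
  have hM := M_pos h
  have hlogpos : 0 < Real.log p := Real.log_pos hp
  have hppos : (0:ℝ) < p := by linarith
  have hlogltp : Real.log p < p := by
    have := Real.log_le_sub_one_of_pos hppos; linarith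
  set δ := Real.log p / p with hδdef
  have hδ : 0 < δ := div_pos hlogpos hppos
  have hδ1 : δ < 1 := by rw [hδdef, div_lt_one hppos]; exact hlogltp
  have h1δ : (0:ℝ) < 1 - δ := by linarith
  have hδp : δ * p = Real.log p := by
    rw [hδdef]; field_simp
  obtain ⟨t₁, ht₁, hft₁⟩ := exists_t1 h hδ hδ1
  set L := Real.sqrt (2/(p+1) * f 0 ^ (p+1)) with hLdef
  set Epx := Real.exp ((Real.log p)^2 / (p - Real.log p)) with hEpx
  have hEpxpos : 0 < Epx := Real.exp_pos _
  set Q := ((1:ℝ)-δ) ^ p with hQdef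
  have hQpos : 0 < Q := Real.rpow_pos_of_pos h1δ p
  -- t₁ bound
  have hA := claimA h hp hδ hδ1 ht₁ hft₁
  have hmulr : ((1-δ) * f 0) ^ p = Q * f 0 ^ p := Real.mul_rpow h1δ.le hM.le
  have hMp1 : f 0 ^ p = f 0 ^ (p-1) * f 0 := by
    have : f 0 ^ p = f 0 ^ ((p-1)+1) := by norm_num
    rw [this, Real.rpow_add hM, Real.rpow_one]
  rw [hmulr, hMp1] at hA
  have step1 : Q * f 0 ^ (p-1) * t₁^2 ≤ 2 * δ := by
    have h' : (Q * f 0 ^ (p-1) * t₁^2) * f 0 ≤ (2*δ) * f 0 := by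
      calc (Q * f 0 ^ (p-1) * t₁^2) * f 0 = Q * (f 0 ^ (p-1) * f 0) * t₁^2 := by ring
      _ ≤ 2*δ*f 0 := hA
    exact le_of_mul_le_mul_right h' hM
  have hMlow := Mp_lower h hp
  have step2 : t₁^2 * ((p+1) * Q) ≤ 4 * δ := by
    have hfac : 0 ≤ (f 0 ^ (p-1) - (p+1)/2) * Q * t₁^2 :=
      mul_nonneg (mul_nonneg (sub_nonneg.2 hMlow) hQpos.le) (sq_nonneg t₁)
    nlinarith [step1, hfac]
  have hp1Q : (0:ℝ) < (p+1) * Q := by positivity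
  have step3 : t₁^2 ≤ 4 * δ / ((p+1) * Q) := (le_div_iff₀ hp1Q).2 step2
  -- lower bound on Q
  have hlb : -δ/(1-δ) ≤ Real.log (1-δ) := by
    have h0 := Real.one_sub_inv_le_log_of_pos h1δ
    have heq : 1 - (1-δ)⁻¹ = -δ/(1-δ) := by field_simp; ring
    linarith [heq ▸ h0]
  have hQ : Q = Real.exp (Real.log (1-δ) * p) := Real.rpow_def_of_pos h1δ p
  have hexp_id : Real.exp ((Real.log p)/(1-δ)) = p * Epx := by
    have hne : p - Real.log p ≠ 0 := by linarith
    have hid : (Real.log p)/(1-δ) = Real.log p + (Real.log p)^2/(p - Real.log p) := by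
      rw [hδdef]
      field_simp
      ring
    rw [hid, Real.exp_add, Real.exp_log hppos]
  have hQge : (p * Epx)⁻¹ ≤ Q := by
    rw [hQ, ← hexp_id, ← Real.exp_neg]
    apply Real.exp_le_exp.2
    calc -((Real.log p)/(1-δ)) = (-δ/(1-δ)) * p := by
          rw [← hδp]; field_simp
    _ ≤ Real.log (1-δ) * p := mul_le_mul_of_nonneg_right hlb hppos.le
  have hQinv : Q⁻¹ ≤ p * Epx := by
    have h2 := inv_anti₀ (by positivity : (0:ℝ) < (p * Epx)⁻¹) hQge
    rwa [inv_inv] at h2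
  have step4 : 4 * δ / ((p+1) * Q) ≤ T2 p := by
    have h4 : 4 * δ / ((p+1) * Q) = (4 * δ / (p+1)) * Q⁻¹ := by
      field_simp
    rw [h4]
    have h5 : (4 * δ / (p+1)) * Q⁻¹ ≤ (4 * δ / (p+1)) * (p * Epx) :=
      mul_le_mul_of_nonneg_left hQinv (by positivity)
    have h6 : (4 * δ / (p+1)) * (p * Epx) = T2 p := by
      rw [T2, hδdef, ← hEpx]
      field_simp
    linarith [h5, h6 ▸ h5]
  have ht1sq : t₁^2 ≤ T2 p := le_trans step3 step4
  have ht1le : t₁ ≤ Real.sqrt (T2 p) := by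
    have := Real.sqrt_le_sqrt ht1sq
    rwa [Real.sqrt_sq ht₁.1.le] at this
  -- (1-δ)^(p+1) ≤ 1/p
  have hsmall : (1-δ)^(p+1) ≤ 1/p := by
    have : (1-δ)^(p+1) = Real.exp (Real.log (1-δ) * (p+1)) := Real.rpow_def_of_pos h1δ _
    rw [this]
    have hlog1δ : Real.log (1-δ) ≤ -δ := by
      have := Real.log_le_sub_one_of_pos h1δ; linarith
    have hlin : Real.log (1-δ) * (p+1) ≤ -Real.log p := by
      calc Real.log (1-δ) * (p+1) ≤ (-δ) * (p+1) :=
            mul_le_mul_of_nonneg_right hlog1δ (by linarith)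
      _ = -(δ*p) - δ := by ring
      _ ≤ -Real.log p := by rw [hδp]; linarith
    calc Real.exp (Real.log (1-δ) * (p+1)) ≤ Real.exp (-Real.log p) := Real.exp_le_exp.2 hlin
    _ = 1/p := by rw [Real.exp_neg, Real.exp_log hppos, one_div]
  have hsc : Real.sqrt (1 - 1/p) ≤ Real.sqrt (1 - (1-δ)^(p+1)) :=
    Real.sqrt_le_sqrt (by linarith)
  -- combine with claim B
  have hcb := claimB h hp hδ hδ1 ht₁ hft₁
  have hr1 : 1 - Real.sqrt (T2 p) ≤ 1 - t₁ := by linarith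
  have hrpos : 0 < 1 - Real.sqrt (T2 p) := by linarith
  have hspos : 0 < Real.sqrt (1 - 1/p) := by
    apply Real.sqrt_pos.2
    have : 1/p < 1 := by rw [div_lt_one hppos]; linarith
    linarith
  have hLnn : 0 ≤ L := Real.sqrt_nonneg _
  have hprod : Real.sqrt (1 - 1/p) * (1 - Real.sqrt (T2 p))
      ≤ Real.sqrt (1 - (1-δ)^(p+1)) * (1 - t₁) :=
    mul_le_mul hsc hr1 hrpos.le (Real.sqrt_nonneg _)
  have hfinal : Real.sqrt (1 - 1/p) * (1 - Real.sqrt (T2 p)) * L ≤ f 0 := by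
    calc Real.sqrt (1 - 1/p) * (1 - Real.sqrt (T2 p)) * L
        ≤ Real.sqrt (1 - (1-δ)^(p+1)) * (1 - t₁) * L :=
          mul_le_mul_of_nonneg_right hprod hLnn
    _ ≤ (1-δ) * f 0 := hcb
    _ ≤ f 0 := by
          have hexpand : (1-δ) * f 0 = f 0 - δ * f 0 := by ring
          rw [hexpand]
          linarith [mul_pos hδ hM]
  have hden : 0 < Real.sqrt (1 - 1/p) * (1 - Real.sqrt (T2 p)) := mul_pos hspos hrpos
  rw [Bf]
  rw [mul_one_div, le_div_iff₀ hden]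
  calc L * (Real.sqrt (1 - 1/p) * (1 - Real.sqrt (T2 p)))
      = Real.sqrt (1 - 1/p) * (1 - Real.sqrt (T2 p)) * L := by ring
  _ ≤ f 0 := hfinal


lemma M_le_Af (h : IsLaneEmden p f) (hp : 1 < p) (hBpos : 0 < Bf p)
    (hch : Real.sqrt (2/(p+1) * f 0 ^ (p+1)) ≤ f 0 * Bf p) :
    f 0 ≤ Af p := by
  have hM := M_pos h
  have hE : (0:ℝ) ≤ 2/(p+1) * f 0 ^ (p+1) := by positivity
  have hsq : 2/(p+1) * f 0 ^ (p+1) ≤ (f 0)^2 * (Bf p)^2 := by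
    nlinarith [Real.sq_sqrt hE, Real.sqrt_nonneg (2/(p+1) * f 0 ^ (p+1)), hch, hM, hBpos]
  have hsplit : f 0 ^ (p+1) = f 0 ^ 2 * f 0 ^ (p-1) := by
    rw [← Real.rpow_natCast (f 0) 2, ← Real.rpow_add hM]
    norm_num
    congr 1
    ring
  have hkey : f 0 ^ (p-1) ≤ (p+1) * (Bf p)^2 / 2 := by
    rw [hsplit] at hsq
    have hp1 : (0:ℝ) < p+1 := by linarith
    have hM2 : (0:ℝ) < f 0 ^ 2 := by positivity
    have h1 : 2 * (f 0 ^ 2 * f 0 ^ (p-1)) ≤ (p+1) * ((f 0)^2 * (Bf p)^2) := by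
      have h2 := mul_le_mul_of_nonneg_left hsq hp1.le
      calc 2 * (f 0 ^ 2 * f 0 ^ (p-1)) = (p+1) * (2/(p+1) * (f 0 ^ 2 * f 0 ^ (p-1))) := by
            field_simp
      _ ≤ (p+1) * ((f 0)^2 * (Bf p)^2) := h2
    have h3 : (2 * f 0 ^ (p-1)) * f 0 ^ 2 ≤ ((p+1) * (Bf p)^2) * f 0 ^ 2 := by
      nlinarith [h1]
    have h4 := le_of_mul_le_mul_right h3 hM2
    linarith
  have hX : (0:ℝ) < (p+1) * (Bf p)^2/2 := by positivity
  have hlog : (p-1) * Real.log (f 0) ≤ Real.log ((p+1) * (Bf p)^2/2) := by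
    have h5 : Real.log (f 0 ^ (p-1)) ≤ Real.log ((p+1) * (Bf p)^2/2) :=
      Real.log_le_log (Real.rpow_pos_of_pos hM _) hkey
    rw [Real.log_rpow hM] at h5
    linarith [h5]
  have hfinal : Real.log (f 0) ≤ Real.log ((p+1) * (Bf p)^2/2)/(p-1) := by
    rw [le_div_iff₀ (by linarith : (0:ℝ) < p-1)]
    linarith [hlog]
  calc f 0 = Real.exp (Real.log (f 0)) := (Real.exp_log hM).symm
  _ ≤ Real.exp (Real.log ((p+1) * (Bf p)^2/2)/(p-1)) := Real.exp_le_exp.2 hfinal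
  _ = Af p := rfl

lemma master : ∀ η > (0:ℝ), ∃ p₀ : ℝ, 2 ≤ p₀ ∧ ∀ p, p₀ ≤ p → ∀ f : ℝ → ℝ, IsLaneEmden p f →
    1 ≤ f 0 ∧ f 0 ≤ Real.sqrt (2/(p+1) * f 0^(p+1)) ∧
      Real.sqrt (2/(p+1) * f 0^(p+1)) ≤ 1 + η := by
  intro η hη
  have h1 : Tendsto (fun p => Af p * Bf p) atTop (𝓝 1) := by
    have := tendsto_Af.mul tendsto_Bf
    simpa using this
  have hev1 : ∀ᶠ p : ℝ in atTop, Af p * Bf p < 1 + η :=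
    h1.eventually (eventually_lt_nhds (by linarith))
  have hsqT : Tendsto (fun p => Real.sqrt (T2 p)) atTop (𝓝 0) := by
    have := (Real.continuous_sqrt.tendsto 0).comp tendsto_T2
    simpa [Function.comp_def] using this
  have hev2 : ∀ᶠ p : ℝ in atTop, Real.sqrt (T2 p) < 1 :=
    hsqT.eventually (eventually_lt_nhds one_pos)
  have hev3 : ∀ᶠ p : ℝ in atTop, 0 < Bf p :=
    tendsto_Bf.eventually (eventually_gt_nhds one_pos)
  obtain ⟨a, ha⟩ := eventually_atTop.1 (hev1.and (hev2.and hev3))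
  refine ⟨max a 2, le_max_right _ _, ?_⟩
  intro p hpge f hf
  have hpa := ha p (le_trans (le_max_left a 2) hpge)
  have hp2 : (2:ℝ) ≤ p := le_trans (le_max_right a 2) hpge
  have hp : 1 < p := by linarith
  have hM1 := M_ge_one hf hp
  have hML := M_le_L hf hp
  refine ⟨hM1, hML, ?_⟩
  have hch := chain hf hp hpa.2.1
  have hMA := M_le_Af hf hp hpa.2.2 hch
  calc Real.sqrt (2/(p+1) * f 0^(p+1)) ≤ f 0 * Bf p := hch
  _ ≤ Af p * Bf p := mul_le_mul_of_nonneg_right hMA hpa.2.2.le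
  _ ≤ 1 + η := hpa.1.le

lemma value_bound (h : IsLaneEmden p f) (hp : 1 < p) (hM1 : 1 ≤ f 0) :
    ∀ t ∈ Icc (-1:ℝ) 1, |f t - (1 - |t|)| ≤ Real.sqrt (2/(p+1) * f 0^(p+1)) - 1 := by
  intro t ht
  set L := Real.sqrt (2/(p+1) * f 0^(p+1)) with hL
  have hL1 : 1 ≤ L := le_trans hM1 (M_le_L h hp)
  have hfeq : f t = f |t| := by
    rcases le_or_gt 0 t with h0 | h0
    · rw [abs_of_nonneg h0]
    · rw [abs_of_neg h0, ← h.2.2.2.2.2.1 t]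
  have hsI : |t| ∈ Icc (0:ℝ) 1 := ⟨abs_nonneg t, abs_le.2 ⟨ht.1, ht.2⟩⟩
  have hlow := lower h |t| hsI
  have hupp := upper h hp |t| hsI
  rw [hfeq]
  rw [abs_le]
  constructor
  · have : (1:ℝ) * (1 - |t|) ≤ f 0 * (1 - |t|) :=
      mul_le_mul_of_nonneg_right hM1 (by linarith [hsI.2])
    nlinarith [hsI.1, hsI.2, hlow]
  · have h2 : f |t| - (1 - |t|) ≤ (L - 1) * (1 - |t|) := by nlinarith [hupp]
    nlinarith [hsI.1, hsI.2, hL1]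

lemma deriv_lower_est (h : IsLaneEmden p f) (hp : 1 < p) {δ' : ℝ}
    (hδ'0 : 0 < δ') (hδ'1 : δ' ≤ 1) (hM1 : 1 ≤ f 0)
    (hLδ : Real.sqrt (2/(p+1) * f 0^(p+1)) ≤ 1 + δ'/2) :
    ∀ t ∈ Icc δ' 1,
      Real.sqrt (1 - (1-δ'/2)^(p+1)) * Real.sqrt (2/(p+1) * f 0^(p+1)) ≤ -deriv f t := by
  intro t ht
  set L := Real.sqrt (2/(p+1) * f 0^(p+1)) with hLdef
  set E := 2/(p+1) * f 0^(p+1) with hEdef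
  have hM := M_pos h
  have hEnn : (0:ℝ) ≤ E := by positivity
  have htI : t ∈ Icc (0:ℝ) 1 := ⟨le_trans hδ'0.le ht.1, ht.2⟩
  have hfnn : 0 ≤ f t := hnonneg h t ⟨by linarith [htI.1], htI.2⟩
  -- f t ≤ (1 - δ'/2) * f 0
  have hfup : f t ≤ (1 - δ'/2) * f 0 := by
    have h1 := upper h hp t htI
    have h2 : L * (1 - t) ≤ L * (1 - δ') := by
      apply mul_le_mul_of_nonneg_left (by linarith [ht.1]) (Real.sqrt_nonneg _)
    have h3 : L * (1 - δ') ≤ (1 + δ'/2) * (1 - δ') :=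
      mul_le_mul_of_nonneg_right hLδ (by linarith)
    have h4 : (1 + δ'/2) * (1 - δ') ≤ 1 - δ'/2 := by nlinarith
    have h5 : (1:ℝ) - δ'/2 ≤ (1 - δ'/2) * f 0 := by nlinarith
    linarith
  have hfac : (0:ℝ) ≤ 1 - δ'/2 := by linarith
  have hfpow : f t ^ (p+1) ≤ (1-δ'/2)^(p+1) * f 0 ^ (p+1) := by
    calc f t ^ (p+1) ≤ ((1-δ'/2) * f 0) ^ (p+1) :=
          Real.rpow_le_rpow hfnn hfup (by linarith)
    _ = (1-δ'/2)^(p+1) * f 0 ^ (p+1) := Real.mul_rpow hfac hM.le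
  set q := 1 - (1-δ'/2)^(p+1) with hq
  have hqnn : 0 ≤ q := by
    have : (1-δ'/2)^(p+1) ≤ 1 := Real.rpow_le_one hfac (by linarith) (by linarith)
    simp only [hq]; linarith
  have hen := energy h hp t ⟨by linarith [htI.1], htI.2⟩
  have hsq : q * E ≤ (deriv f t)^2 := by
    have hp1 : (0:ℝ) < 2/(p+1) := by positivity
    have hkey : 2/(p+1) * f t ^ (p+1) ≤ (1-δ'/2)^(p+1) * E := by
      rw [hEdef]
      calc 2/(p+1) * f t ^ (p+1) ≤ 2/(p+1) * ((1-δ'/2)^(p+1) * f 0 ^ (p+1)) :=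
            mul_le_mul_of_nonneg_left hfpow hp1.le
      _ = (1-δ'/2)^(p+1) * (2/(p+1) * f 0 ^ (p+1)) := by ring
    simp only [hq]
    nlinarith [hkey, hen]
  calc Real.sqrt q * L = Real.sqrt (q * E) := (Real.sqrt_mul hqnn E).symm
  _ ≤ Real.sqrt ((deriv f t)^2) := Real.sqrt_le_sqrt hsq
  _ = |deriv f t| := Real.sqrt_sq_eq_abs _
  _ = -deriv f t := abs_of_nonpos (deriv_nonpos h t htI)

lemma target_deriv_pos {t : ℝ} (ht : 0 < t) : deriv (fun s : ℝ => 1 - |s|) t = -1 := by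
  have hbase : HasDerivAt (fun s : ℝ => 1 - s) (-1) t := by
    simpa using (hasDerivAt_id t).const_sub 1
  have hev : (fun s : ℝ => 1 - |s|) =ᶠ[𝓝 t] (fun s : ℝ => 1 - s) := by
    filter_upwards [Ioi_mem_nhds ht] with s hs
    rw [abs_of_pos hs]
  exact (hbase.congr_of_eventuallyEq hev).deriv

lemma target_deriv_neg {t : ℝ} (ht : t < 0) : deriv (fun s : ℝ => 1 - |s|) t = 1 := by
  have hbase : HasDerivAt (fun s : ℝ => 1 + s) (1) t := by
    simpa using (hasDerivAt_id t).const_add 1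
  have hev : (fun s : ℝ => 1 - |s|) =ᶠ[𝓝 t] (fun s : ℝ => 1 + s) := by
    filter_upwards [Iio_mem_nhds ht] with s hs
    rw [abs_of_neg hs]
    ring
  exact (hbase.congr_of_eventuallyEq hev).deriv

end LEAux

/-- As `p → +∞`, `u_p → 1 - |·| = 2G(·,0)` uniformly on `[-1,1]`, and in `C¹` on
compact subsets of `[-1,1] \ {0}`. -/
theorem convergence_to_green_function
    (u : ℝ → ℝ → ℝ) (hu : ∀ p : ℝ, 1 < p → IsLaneEmden p (u p)) :
    (∀ ε > (0 : ℝ), ∃ p₀ : ℝ, ∀ p ≥ p₀, ∀ t ∈ Icc (-1 : ℝ) 1,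
      |u p t - (1 - |t|)| < ε) ∧
    (∀ K : Set ℝ, IsCompact K → K ⊆ Icc (-1 : ℝ) 1 \ {0} →
      ∀ ε > (0 : ℝ), ∃ p₀ : ℝ, ∀ p ≥ p₀, ∀ t ∈ K,
        |u p t - (1 - |t|)| < ε ∧
        |deriv (u p) t - deriv (fun s : ℝ => 1 - |s|) t| < ε) := by
  constructor
  · intro ε hε
    obtain ⟨p₀, hp₀2, hp₀⟩ := LEAux.master (ε/2) (by linarith)
    refine ⟨p₀, ?_⟩
    intro p hp t ht
    have hp1 : (1:ℝ) < p := by linarith [hp₀2, hp]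
    obtain ⟨hM1, hML, hL⟩ := hp₀ p hp (u p) (hu p hp1)
    have hvb := LEAux.value_bound (hu p hp1) hp1 hM1 t ht
    calc |u p t - (1 - |t|)| ≤ Real.sqrt (2/(p+1) * (u p) 0 ^ (p+1)) - 1 := hvb
    _ ≤ ε/2 := by linarith
    _ < ε := by linarith
  · intro K hK hKsub ε hε
    rcases K.eq_empty_or_nonempty with hKe | hKne
    · exact ⟨2, fun p _ t ht => absurd ht (by simp [hKe])⟩
    obtain ⟨t₀, ht₀K, ht₀min⟩ := hK.exists_isMinOn hKne (continuous_abs.continuousOn)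
    set δ' := |t₀| with hδ'
    have ht₀ne : t₀ ≠ 0 := by
      intro h0
      have := (hKsub ht₀K).2
      simp [h0] at this
    have hδ'0 : 0 < δ' := abs_pos.2 ht₀ne
    have hδ'1 : δ' ≤ 1 := abs_le.2 ⟨(hKsub ht₀K).1.1, (hKsub ht₀K).1.2⟩
    have hmin : ∀ t ∈ K, δ' ≤ |t| := fun t htK => ht₀min htK
    set η := min (ε/2) (δ'/2) with hηdef
    have hη0 : 0 < η := lt_min (by linarith) (by linarith)
    obtain ⟨p₁, hp₁2, hp₁⟩ := LEAux.master η hη0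
    have hr1 : 1 - δ'/2 < 1 := by linarith
    have hrt : Tendsto (fun p : ℝ => ((1:ℝ) - δ'/2) ^ (p+1)) atTop (𝓝 0) := by
      have h := tendsto_rpow_atTop_of_base_lt_one (1-δ'/2) (by linarith) hr1
      have := h.comp (tendsto_atTop_add_const_right atTop 1 tendsto_id)
      apply this.congr'
      filter_upwards with x
      simp
    have hevc : ∀ᶠ p : ℝ in atTop, 1 - Real.sqrt (1 - (1-δ'/2)^(p+1)) < ε := by
      have h1 : Tendsto (fun p : ℝ => 1 - ((1:ℝ)-δ'/2)^(p+1)) atTop (𝓝 1) := by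
        have : Tendsto (fun p : ℝ => (1:ℝ) - ((1:ℝ)-δ'/2)^(p+1)) atTop (𝓝 (1 - 0)) :=
          tendsto_const_nhds.sub hrt
        simpa using this
      have h2 := (Real.continuous_sqrt.tendsto 1).comp h1
      simp only [Real.sqrt_one] at h2
      have hsq : Tendsto (fun p : ℝ => 1 - Real.sqrt (1 - (1-δ'/2)^(p+1))) atTop (𝓝 0) := by
        have h3 : Tendsto (fun p : ℝ => (1:ℝ) - Real.sqrt (1 - (1-δ'/2)^(p+1))) atTop (𝓝 (1 - 1)) :=
          tendsto_const_nhds.sub h2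
        simpa using h3
      exact hsq.eventually (eventually_lt_nhds hε)
    obtain ⟨p₂, hp₂⟩ := eventually_atTop.1 hevc
    refine ⟨max p₁ p₂, ?_⟩
    intro p hp t htK
    have hpp₁ : p₁ ≤ p := le_trans (le_max_left _ _) hp
    have hpp₂ : p₂ ≤ p := le_trans (le_max_right _ _) hp
    have hp1 : (1:ℝ) < p := by linarith [hp₁2]
    have hle := hu p hp1
    obtain ⟨hM1, hML, hL⟩ := hp₁ p hpp₁ (u p) hle
    set L := Real.sqrt (2/(p+1) * (u p) 0 ^ (p+1)) with hLdef
    have hL1 : 1 ≤ L := le_trans hM1 hML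
    have htI : t ∈ Icc (-1:ℝ) 1 := (hKsub htK).1
    have htne : t ≠ 0 := by
      intro h0
      have := (hKsub htK).2
      simp [h0] at this
    constructor
    · have hvb := LEAux.value_bound hle hp1 hM1 t htI
      calc |u p t - (1-|t|)| ≤ L - 1 := hvb
      _ ≤ η := by linarith
      _ ≤ ε/2 := min_le_left _ _
      _ < ε := by linarith
    · have hLδ : L ≤ 1 + δ'/2 := by
        have := min_le_right (ε/2) (δ'/2)
        linarith [hL]
      set c' := Real.sqrt (1 - (1-δ'/2)^(p+1)) with hc'
      have hcsmall : 1 - c' < ε := hp₂ p hpp₂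
      have hder := LEAux.deriv_lower_est hle hp1 hδ'0 hδ'1 hM1 hLδ
      have key : ∀ s ∈ Icc δ' 1, |deriv (u p) s - (-1)| < ε := by
        intro s hsI
        have h1 : c' * L ≤ -deriv (u p) s := hder s hsI
        have hsIcc : s ∈ Icc (-1:ℝ) 1 := ⟨by linarith [hsI.1, hδ'0], hsI.2⟩
        have h2 : |deriv (u p) s| ≤ L := LEAux.abs_deriv_le hle hp1 s hsIcc
        have hc'nn : 0 ≤ c' := Real.sqrt_nonneg _
        have h3 : c' ≤ c' * L := by nlinarith
        have h4 : -deriv (u p) s ≤ L := le_trans (neg_le_abs _) h2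
        have hηε : η ≤ ε/2 := min_le_left _ _
        rw [abs_lt]
        constructor
        · -- -ε < deriv f s + 1
          have : -L ≤ deriv (u p) s := by linarith
          have hLε : L ≤ 1 + ε/2 := by linarith
          linarith
        · have : deriv (u p) s ≤ -c' := by linarith
          linarith
      rcases lt_trichotomy t 0 with htn | htz | htp
      · have hmem : -t ∈ Icc δ' 1 := by
          constructor
          · have := hmin t htK
            rwa [abs_of_neg htn] at this
          · linarith [htI.1]
        have hk := key (-t) hmem
        rw [LEAux.target_deriv_neg htn, LEAux.deriv_neg_eq hle t]
        have heq : -deriv (u p) (-t) - 1 = -(deriv (u p) (-t) - (-1)) := by ring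
        rw [heq, abs_neg]
        exact hk
      · exact absurd htz htne
      · have hmem : t ∈ Icc δ' 1 := by
          constructor
          · have := hmin t htK
            rwa [abs_of_pos htp] at this
          · exact htI.2
        rw [LEAux.target_deriv_pos htp]
        exact key t hmem
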